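/- In the monopoly setting, every revenue-maximizing partition π satisfies SW(π) ≥ (p^1 + p^2)/(3·|G|). -/

import Mathlib

open Finset

variable {B G S : Type*} [Fintype B] [Fintype G] [Fintype S]
variable [DecidableEq B] [DecidableEq G] [DecidableEq S]

/-- `v_b(Ḡ)`: buyer `b`'s total valuation of the variants in `Ḡ`. -/
def vsum (v : B → G → ℕ) (b : B) (Gb : Finset G) : ℕ := ∑ g ∈ Gb, v b g

/-- `V̄1(B̄,Ḡ)`: the largest value among `(v_b(Ḡ))_{b∈B̄}` (`0` if `B̄ = ∅`). -/
def V1 (v : B → G → ℕ) (Bb : Finset B) (Gb : Finset G) : ℕ :=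
  Bb.sup (fun b => vsum v b Gb)

/-- `V̄2(B̄,Ḡ)`: the second-largest value, counted with multiplicity
(`0` if `|B̄| ≤ 1`).  It equals the minimum, over removal of one buyer,
of the maximum over the remaining buyers. -/
def V2 (v : B → G → ℕ) (Bb : Finset B) (Gb : Finset G) : ℕ :=
  if h : Bb.Nonempty then Bb.inf' h (fun b => V1 v (Bb.erase b) Gb) else 0

/-- The set of buyers choosing seller `s` under the assignment `σ`. -/
def buyersOf (σ : B → S) (s : S) : Finset B := univ.filter (fun b => σ b = s)

/-- Buyer `b`'s utility in the multi-seller game. -/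
def ubuyer (v : B → G → ℕ) (τ : S → Finpartition (univ : Finset G)) (σ : B → S) (b : B) : ℚ :=
  (Fintype.card G : ℚ)⁻¹ *
    ∑ Gb ∈ (τ (σ b)).parts, max ((vsum v b Gb : ℚ) - (V2 v (buyersOf σ (σ b)) Gb : ℚ)) 0

/-- Seller `s`'s utility in the multi-seller game. -/
def useller (v : B → G → ℕ) (τ : S → Finpartition (univ : Finset G)) (σ : B → S) (s : S) : ℚ :=
  (Fintype.card G : ℚ)⁻¹ * ∑ Gb ∈ (τ s).parts, (V2 v (buyersOf σ s) Gb : ℚ)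

/-- Social welfare in the multi-seller game. -/
def SWm (v : B → G → ℕ) (τ : S → Finpartition (univ : Finset G)) (σ : B → S) : ℚ :=
  ((Fintype.card S : ℚ) * (Fintype.card G : ℚ))⁻¹ *
    ∑ s : S, ∑ Gb ∈ (τ s).parts, (V1 v (buyersOf σ s) Gb : ℚ)

/-- Social welfare in the single-seller (monopoly) game. -/
def SW1 (v : B → G → ℕ) (π : Finpartition (univ : Finset G)) : ℚ :=
  (Fintype.card G : ℚ)⁻¹ * ∑ Gb ∈ π.parts, (V1 v (univ : Finset B) Gb : ℚ)

/-- The monopolist's revenue. -/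
def rev1 (v : B → G → ℕ) (π : Finpartition (univ : Finset G)) : ℚ :=
  (Fintype.card G : ℚ)⁻¹ * ∑ Gb ∈ π.parts, (V2 v (univ : Finset B) Gb : ℚ)

/-- Buyer `b`'s utility in the monopoly game. -/
def ub1 (v : B → G → ℕ) (π : Finpartition (univ : Finset G)) (b : B) : ℚ :=
  (Fintype.card G : ℚ)⁻¹ *
    ∑ Gb ∈ π.parts, max ((vsum v b Gb : ℚ) - (V2 v (univ : Finset B) Gb : ℚ)) 0

/-- `π` refines `π̂`: every block of `π̂` is a union of blocks of `π`. -/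
def IsRefinement (π πhat : Finpartition (univ : Finset G)) : Prop :=
  ∀ t ∈ πhat.parts, ∃ P ⊆ π.parts, t = P.sup id

/-- `σ` is a (pure) Nash equilibrium of the buyers' subgame induced by `τ`. -/
def IsNash (v : B → G → ℕ) (τ : S → Finpartition (univ : Finset G)) (σ : B → S) : Prop :=
  ∀ (b : B) (s : S), ubuyer v τ (Function.update σ b s) b ≤ ubuyer v τ σ b

/-- `p^i(G)`: the number of goods demanded by at least `i` buyers. -/
def pdem (v : B → G → ℕ) (i : ℕ) : ℕ :=
  (univ.filter (fun g : G => i ≤ ∑ b : B, v b g)).card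

/-- The trivial (indiscrete) partition `{G}`, which discloses nothing. -/
def trivPart (G : Type*) [Fintype G] [DecidableEq G] [Nonempty G] :
    Finpartition (univ : Finset G) :=
  Finpartition.indiscrete Finset.univ_nonempty.ne_empty

/-- `(π, f)` is a pure subgame perfect equilibrium of the two-stage game. -/
def IsSPE (v : B → G → ℕ) (π : S → Finpartition (univ : Finset G))
    (f : (S → Finpartition (univ : Finset G)) → (B → S)) : Prop :=
  (∀ τ, IsNash v τ (f τ)) ∧
  ∀ (s : S) (ρ : Finpartition (univ : Finset G)),
    useller v (Function.update π s ρ) (f (Function.update π s ρ)) s ≤ useller v π (f π) s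

set_option linter.unusedSectionVars false

section AuxLemmas

variable [Nonempty B]

lemma V2_le_V1 (v : B → G → ℕ) (Bb : Finset B) (Gb : Finset G) :
    V2 v Bb Gb ≤ V1 v Bb Gb := by
  unfold V2
  split
  · next h =>
    exact le_trans (Finset.inf'_le _ h.choose_spec)
      (Finset.sup_mono (Finset.erase_subset _ _))
  · exact Nat.zero_le _

lemma one_le_V2 [Nonempty B] (v : B → G → ℕ) {C : Finset G} {b1 b2 : B} (hne : b1 ≠ b2)
    (h1 : 1 ≤ vsum v b1 C) (h2 : 1 ≤ vsum v b2 C) : 1 ≤ V2 v (univ : Finset B) C := by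
  unfold V2
  rw [dif_pos univ_nonempty]
  apply Finset.le_inf'
  intro b _
  simp only [V1]
  rcases ne_or_eq b1 b with hb | rfl
  · exact le_trans h1 (Finset.le_sup (f := fun b' => vsum v b' C)
      (Finset.mem_erase.mpr ⟨hb, mem_univ _⟩))
  · exact le_trans h2 (Finset.le_sup (f := fun b' => vsum v b' C)
      (Finset.mem_erase.mpr ⟨hne.symm, mem_univ _⟩))

/-- The class of goods in `D` owned by `b`. -/
def clsOf (w : G → B) (D : Finset G) (b : B) : Finset G := D.filter fun g => w g = b

lemma clsOf_subset (w : G → B) (D : Finset G) (b : B) : clsOf w D b ⊆ D :=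
  Finset.filter_subset _ _

lemma mem_clsOf (w : G → B) (D : Finset G) {g : G} (hg : g ∈ D) : g ∈ clsOf w D (w g) :=
  Finset.mem_filter.mpr ⟨hg, rfl⟩

lemma clsOf_disjoint (w : G → B) (D : Finset G) {b b' : B} (h : b ≠ b') :
    Disjoint (clsOf w D b) (clsOf w D b') := by
  rw [Finset.disjoint_left]
  intro g h1 h2
  exact h (((Finset.mem_filter.mp h1).2).symm.trans (Finset.mem_filter.mp h2).2)

lemma pairing [Nonempty B] (w : G → B) : ∀ n (D : Finset G), D.card ≤ n →
    2 * (univ.sup fun b => (clsOf w D b).card) ≤ D.card →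
    ∃ P : Finset (Finset G), (↑P : Set (Finset G)).PairwiseDisjoint id ∧
      (∀ p ∈ P, p ⊆ D ∧ ∃ x ∈ p, ∃ y ∈ p, w x ≠ w y) ∧
      D.card ≤ 3 * P.card := by
  intro n
  induction n with
  | zero =>
    intro D hcard _
    exact ⟨∅, by simp, by simp, by omega⟩
  | succ n ih =>
    intro D hcard hm
    by_cases hD0 : D.card = 0
    · exact ⟨∅, by simp, by simp, by omega⟩
    have hD1 : 1 ≤ univ.sup fun b => (clsOf w D b).card := by
      obtain ⟨g, hg⟩ := Finset.card_pos.mp (Nat.pos_of_ne_zero hD0)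
      exact le_trans (Finset.card_pos.mpr ⟨g, mem_clsOf w D hg⟩)
        (Finset.le_sup (f := fun b => (clsOf w D b).card) (mem_univ (w g)))
    by_cases hD3 : D.card ≤ 3
    · -- small case: one pair suffices
      have h2 : 2 ≤ D.card := by omega
      obtain ⟨x, hx, y, hy, hxy⟩ := Finset.one_lt_card.mp h2
      have hwxy : w x ≠ w y := by
        intro he
        have h2' : 2 ≤ (clsOf w D (w y)).card := by
          apply Finset.one_lt_card.mpr
          exact ⟨x, he ▸ mem_clsOf w D hx, y, mem_clsOf w D hy, hxy⟩
        have := le_trans h2' (Finset.le_sup (f := fun b => (clsOf w D b).card)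
          (mem_univ (w y)))
        omega
      refine ⟨{({x, y} : Finset G)}, by simp, ?_, by simp; omega⟩
      intro p hp
      rw [Finset.mem_singleton] at hp
      subst hp
      exact ⟨by simp [Finset.insert_subset_iff, hx, hy], x, by simp, y, by simp, hwxy⟩
    · -- big case
      push_neg at hD3
      obtain ⟨b1, _, hb1⟩ := Finset.exists_mem_eq_sup univ univ_nonempty
        (fun b => (clsOf w D b).card)
      have hcls_le : ∀ b, (clsOf w D b).card ≤ (clsOf w D b1).card := fun b =>
        hb1 ▸ Finset.le_sup (f := fun b => (clsOf w D b).card) (mem_univ b)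
      have hm1 : 2 * (clsOf w D b1).card ≤ D.card := hb1 ▸ hm
      have hex : ∃ g ∈ D, w g ≠ b1 := by
        by_contra hno
        push_neg at hno
        have hDb : clsOf w D b1 = D := by
          apply Finset.Subset.antisymm (clsOf_subset w D b1)
          intro g hg
          exact Finset.mem_filter.mpr ⟨hg, hno g hg⟩
        rw [hDb] at hm1
        omega
      obtain ⟨g0, hg0D, hg0b⟩ := hex
      obtain ⟨b2, hb2mem, hb2⟩ := Finset.exists_mem_eq_sup (univ.erase b1)
        ⟨w g0, Finset.mem_erase.mpr ⟨hg0b, mem_univ _⟩⟩ (fun b => (clsOf w D b).card)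
      have hb2ne : b2 ≠ b1 := (Finset.mem_erase.mp hb2mem).1
      have hcls2_le : ∀ b, b ≠ b1 → (clsOf w D b).card ≤ (clsOf w D b2).card := fun b hb =>
        hb2 ▸ Finset.le_sup (f := fun b => (clsOf w D b).card)
          (Finset.mem_erase.mpr ⟨hb, mem_univ b⟩)
      have hb2pos : 0 < (clsOf w D b2).card :=
        lt_of_lt_of_le (Finset.card_pos.mpr ⟨g0, mem_clsOf w D hg0D⟩) (hcls2_le (w g0) hg0b)
      have hb1pos : 0 < (clsOf w D b1).card := lt_of_lt_of_le hb2pos (hcls_le b2)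
      obtain ⟨x, hx⟩ := Finset.card_pos.mp hb1pos
      obtain ⟨y, hy⟩ := Finset.card_pos.mp hb2pos
      have hwx : w x = b1 := (Finset.mem_filter.mp hx).2
      have hwy : w y = b2 := (Finset.mem_filter.mp hy).2
      have hxD : x ∈ D := (Finset.mem_filter.mp hx).1
      have hyD : y ∈ D := (Finset.mem_filter.mp hy).1
      have hxy : x ≠ y := fun he => hb2ne (by rw [← hwy, ← he, hwx])
      have hyx : y ∈ D.erase x := Finset.mem_erase.mpr ⟨fun h => hxy h.symm, hyD⟩
      have hD'card : ((D.erase x).erase y).card = D.card - 2 := by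
        rw [Finset.card_erase_of_mem hyx, Finset.card_erase_of_mem hxD]
        omega
      have hxD' : x ∉ (D.erase x).erase y :=
        fun h => (Finset.notMem_erase x D) (Finset.mem_of_mem_erase h)
      have hyD' : y ∉ (D.erase x).erase y := Finset.notMem_erase y _
      have hD'sub : (D.erase x).erase y ⊆ D :=
        le_trans (Finset.erase_subset _ _) (Finset.erase_subset _ _)
      have hcls' : ∀ b, clsOf w ((D.erase x).erase y) b = ((clsOf w D b).erase x).erase y := by
        intro b
        unfold clsOf
        rw [Finset.filter_erase, Finset.filter_erase]
      have hinv : 2 * (univ.sup fun b => (clsOf w ((D.erase x).erase y) b).card)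
          ≤ ((D.erase x).erase y).card := by
        obtain ⟨b3, _, hb3⟩ := Finset.exists_mem_eq_sup univ univ_nonempty
          (fun b => (clsOf w ((D.erase x).erase y) b).card)
        rw [hb3, hD'card, hcls' b3]
        by_cases h31 : b3 = b1
        · subst h31
          have he1 : ((clsOf w D b3).erase x).card = (clsOf w D b3).card - 1 :=
            Finset.card_erase_of_mem hx
          have he2 := Finset.card_le_card (Finset.erase_subset y ((clsOf w D b3).erase x))
          omega
        by_cases h32 : b3 = b2
        · subst h32
          have hyx' : y ∈ (clsOf w D b3).erase x :=
            Finset.mem_erase.mpr ⟨fun h => hxy h.symm, hy⟩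
          have he1 : (((clsOf w D b3).erase x).erase y).card
              = ((clsOf w D b3).erase x).card - 1 := Finset.card_erase_of_mem hyx'
          have he2 := Finset.card_le_card (Finset.erase_subset x (clsOf w D b3))
          have h3 := hcls_le b3
          omega
        · have hsub : ((clsOf w D b3).erase x).erase y ⊆ clsOf w D b3 :=
            le_trans (Finset.erase_subset _ _) (Finset.erase_subset _ _)
          have hc3 := Finset.card_le_card hsub
          have h3b2 : (clsOf w D b3).card ≤ (clsOf w D b2).card := hcls2_le b3 h31
          have h3b1 : (clsOf w D b2).card ≤ (clsOf w D b1).card := hcls_le b2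
          have hdisj12 : Disjoint (clsOf w D b1) (clsOf w D b2) :=
            clsOf_disjoint w D (fun h => hb2ne h.symm)
          have hdisj3 : Disjoint (clsOf w D b1 ∪ clsOf w D b2) (clsOf w D b3) := by
            rw [Finset.disjoint_union_left]
            exact ⟨clsOf_disjoint w D (fun h => h31 h.symm),
              clsOf_disjoint w D (fun h => h32 h.symm)⟩
          have hunion : (clsOf w D b1 ∪ clsOf w D b2 ∪ clsOf w D b3).card ≤ D.card := by
            apply Finset.card_le_card
            intro g hg
            rcases Finset.mem_union.mp hg with h | h
            · rcases Finset.mem_union.mp h with h' | h'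
              · exact clsOf_subset w D b1 h'
              · exact clsOf_subset w D b2 h'
            · exact clsOf_subset w D b3 h
          rw [Finset.card_union_of_disjoint hdisj3, Finset.card_union_of_disjoint hdisj12]
            at hunion
          omega
      obtain ⟨P', hP'disj, hP'prop, hP'card⟩ := ih ((D.erase x).erase y) (by omega) hinv
      refine ⟨insert ({x, y} : Finset G) P', ?_, ?_, ?_⟩
      · rw [Finset.coe_insert]
        apply Set.pairwiseDisjoint_insert.mpr
        refine ⟨hP'disj, ?_⟩
        intro p hp _
        rw [Finset.mem_coe] at hp
        have hpD' : p ⊆ (D.erase x).erase y := (hP'prop p hp).1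
        simp only [id]
        rw [Finset.disjoint_left]
        intro a ha
        rcases Finset.mem_insert.mp ha with rfl | ha'
        · exact fun h => hxD' (hpD' h)
        · rw [Finset.mem_singleton] at ha'
          subst ha'
          exact fun h => hyD' (hpD' h)
      · intro p hp
        rcases Finset.mem_insert.mp hp with rfl | hp'
        · refine ⟨by simp [Finset.insert_subset_iff, hxD, hyD], x, by simp, y, by simp, ?_⟩
          rw [hwx, hwy]
          exact fun h => hb2ne h.symm
        · obtain ⟨h1, h2⟩ := hP'prop p hp'
          exact ⟨le_trans h1 hD'sub, h2⟩
      · have hnot : ({x, y} : Finset G) ∉ P' := by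
          intro h
          exact hxD' ((hP'prop _ h).1 (Finset.mem_insert_self x {y}))
        rw [Finset.card_insert_of_notMem hnot]
        omega

lemma pairing_inj (w : G → B) (D : Finset G) (b1 : B)
    (h : (D \ clsOf w D b1).card ≤ (clsOf w D b1).card) :
    ∃ P : Finset (Finset G), (↑P : Set (Finset G)).PairwiseDisjoint id ∧
      (∀ p ∈ P, p ⊆ D ∧ ∃ x ∈ p, ∃ y ∈ p, w x ≠ w y) ∧
      P.card = (D \ clsOf w D b1).card := by
  set C := clsOf w D b1 with hC
  set E := D \ C with hE
  have hcard : Fintype.card ↥E ≤ Fintype.card ↥C := by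
    rwa [Fintype.card_coe, Fintype.card_coe]
  obtain ⟨φ⟩ := Function.Embedding.nonempty_of_card_le hcard
  have hEC : ∀ {g : G}, g ∈ E → g ∉ C := fun hg => (Finset.mem_sdiff.mp hg).2
  have hED : E ⊆ D := Finset.sdiff_subset
  have hCD : C ⊆ D := clsOf_subset w D b1
  have hwC : ∀ {g : G}, g ∈ C → w g = b1 := fun hg => (Finset.mem_filter.mp hg).2
  have hwE : ∀ {g : G}, g ∈ E → w g ≠ b1 := by
    intro g hg hw
    exact hEC hg (Finset.mem_filter.mpr ⟨hED hg, hw⟩)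
  refine ⟨E.attach.image (fun x => ({x.1, (φ x).1} : Finset G)), ?_, ?_, ?_⟩
  · intro p hp p' hp' hne
    rw [Finset.mem_coe, Finset.mem_image] at hp hp'
    obtain ⟨x, _, rfl⟩ := hp
    obtain ⟨x', _, rfl⟩ := hp'
    have hxx : x ≠ x' := fun h => hne (by rw [h])
    have hvxx : (x : G) ≠ (x' : G) := fun h => hxx (Subtype.ext h)
    have hφxx : ((φ x : G)) ≠ ((φ x') : G) :=
      fun h => hxx (φ.injective (Subtype.ext h))
    simp only [Function.onFun, id_eq]
    rw [Finset.disjoint_left]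
    intro a ha
    rcases Finset.mem_insert.mp ha with rfl | ha'
    · intro hmem
      rcases Finset.mem_insert.mp hmem with h' | h'
      · exact hvxx h'
      · rw [Finset.mem_singleton] at h'
        exact hEC x.2 (h' ▸ (φ x').2)
    · rw [Finset.mem_singleton] at ha'
      subst ha'
      intro hmem
      rcases Finset.mem_insert.mp hmem with h' | h'
      · exact hEC x'.2 (h'.symm ▸ (φ x).2)
      · rw [Finset.mem_singleton] at h'
        exact hφxx h'
  · intro p hp
    rw [Finset.mem_image] at hp
    obtain ⟨x, _, rfl⟩ := hp
    refine ⟨?_, x.1, by simp, (φ x).1, by simp, ?_⟩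
    · simp only [Finset.insert_subset_iff, Finset.singleton_subset_iff]
      exact ⟨hED x.2, hCD (φ x).2⟩
    · rw [hwC (φ x).2]
      exact hwE x.2
  · rw [Finset.card_image_of_injOn, Finset.card_attach]
    intro x _ x' _ hpq
    have hpq' : ({(x : G), ((φ x) : G)} : Finset G) = {(x' : G), ((φ x') : G)} := hpq
    have : (x' : G) ∈ ({(x : G), ((φ x) : G)} : Finset G) := by
      rw [hpq']; exact Finset.mem_insert_self _ _
    rcases Finset.mem_insert.mp this with h' | h'
    · exact Subtype.ext h'.symm
    · rw [Finset.mem_singleton] at h'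
      exact absurd ((h' ▸ (φ x).2) : (x' : G) ∈ C) (hEC x'.2)

lemma exists_two_demanders (v : B → G → ℕ) (hv : ∀ b g, v b g ≤ 1) (g : G)
    (h2 : 2 ≤ ∑ b, v b g) :
    ∃ b1 b2 : B, b1 ≠ b2 ∧ v b1 g = 1 ∧ v b2 g = 1 := by
  have h1 : ∃ b, v b g ≠ 0 := by
    by_contra h
    push_neg at h
    rw [Finset.sum_eq_zero (fun b _ => h b)] at h2
    omega
  obtain ⟨b1, hb1⟩ := h1
  have hb1' : v b1 g = 1 := le_antisymm (hv b1 g) (Nat.one_le_iff_ne_zero.mpr hb1)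
  have hadd : v b1 g + ∑ b ∈ univ.erase b1, v b g = ∑ b, v b g :=
    Finset.add_sum_erase univ (fun b => v b g) (mem_univ b1)
  have hsum : 1 ≤ ∑ b ∈ univ.erase b1, v b g := by omega
  have h3 : ∃ b ∈ univ.erase b1, v b g ≠ 0 := by
    by_contra h
    push_neg at h
    rw [Finset.sum_eq_zero h] at hsum
    omega
  obtain ⟨b2, hb2mem, hb2⟩ := h3
  exact ⟨b1, b2, fun h => (Finset.mem_erase.mp hb2mem).1 h.symm,
    hb1', le_antisymm (hv b2 g) (Nat.one_le_iff_ne_zero.mpr hb2)⟩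

lemma exists_partition_of_pairs [Nonempty B] (v : B → G → ℕ) (hv : ∀ b g, v b g ≤ 1)
    (P : Finset (Finset G))
    (hdisj : (↑P : Set (Finset G)).PairwiseDisjoint id)
    (hpair : ∀ p ∈ P, ∃ b1 b2 : B, b1 ≠ b2 ∧ 1 ≤ vsum v b1 p ∧ 1 ≤ vsum v b2 p)
    (hPD : ∀ p ∈ P, ∀ g ∈ p, (∑ b, v b g) = 1) :
    ∃ ρ : Finpartition (univ : Finset G),
      (univ.filter fun g : G => 2 ≤ ∑ b, v b g).card + P.card
        ≤ ∑ C ∈ ρ.parts, V2 v (univ : Finset B) C := by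
  classical
  set U : Finset G := P.sup id with hU
  set Sng : Finset (Finset G) := (univ \ U).image (fun g => ({g} : Finset G)) with hSng
  have hPU : ∀ p ∈ P, p ⊆ U := fun p hp => Finset.le_sup (f := id) hp
  have hPne : ∀ p ∈ P, p.Nonempty := by
    intro p hp
    obtain ⟨b1, _, _, h1, _⟩ := hpair p hp
    by_contra h
    rw [Finset.not_nonempty_iff_eq_empty] at h
    subst h
    simp [vsum] at h1
  have hindep : (P ∪ Sng).SupIndep id := by
    rw [Finset.supIndep_iff_pairwiseDisjoint, Finset.coe_union]
    apply Set.pairwiseDisjoint_union.mpr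
    refine ⟨hdisj, ?_, ?_⟩
    · intro p hp q hq hne
      rw [Finset.mem_coe, hSng, Finset.mem_image] at hp hq
      obtain ⟨g, hg, rfl⟩ := hp
      obtain ⟨g', hg', rfl⟩ := hq
      simp only [Function.onFun, id_eq]
      rw [Finset.disjoint_singleton]
      exact fun h => hne (by rw [h])
    · intro p hp q hq _
      rw [Finset.mem_coe] at hp hq
      rw [hSng, Finset.mem_image] at hq
      obtain ⟨g, hg, rfl⟩ := hq
      simp only [Function.onFun, id_eq]
      rw [Finset.disjoint_singleton_right]
      exact fun h => (Finset.mem_sdiff.mp hg).2 (hPU p hp h)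
  have hsup : (P ∪ Sng).sup id = (univ : Finset G) := by
    rw [Finset.sup_union, hSng, Finset.sup_image]
    have : ((univ \ U).sup (id ∘ fun g => ({g} : Finset G))) = univ \ U :=
      Finset.sup_singleton_eq_self _
    rw [this, ← hU, Finset.sup_eq_union]
    exact Finset.union_sdiff_of_subset (Finset.subset_univ U)
  refine ⟨Finpartition.ofErase (P ∪ Sng) hindep hsup, ?_⟩
  rw [Finpartition.ofErase_parts]
  set Mset : Finset G := univ.filter fun g : G => 2 ≤ ∑ b, v b g with hMset
  have hMU : ∀ g ∈ Mset, g ∉ U := by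
    intro g hg hgU
    rw [hU, Finset.mem_sup] at hgU
    obtain ⟨p, hp, hgp⟩ := hgU
    have := hPD p hp g hgp
    have h2 := (Finset.mem_filter.mp hg).2
    omega
  have hQsub : P ∪ Mset.image (fun g => ({g} : Finset G)) ⊆ (P ∪ Sng).erase ⊥ := by
    intro p hp
    rcases Finset.mem_union.mp hp with h | h
    · exact Finset.mem_erase.mpr ⟨(hPne p h).ne_empty, Finset.mem_union_left _ h⟩
    · rw [Finset.mem_image] at h
      obtain ⟨g, hg, rfl⟩ := h
      refine Finset.mem_erase.mpr ⟨Finset.singleton_ne_empty g, Finset.mem_union_right _ ?_⟩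
      rw [hSng, Finset.mem_image]
      exact ⟨g, Finset.mem_sdiff.mpr ⟨mem_univ g, hMU g hg⟩, rfl⟩
  have hQdisj : Disjoint P (Mset.image (fun g => ({g} : Finset G))) := by
    rw [Finset.disjoint_right]
    intro p hp hpP
    rw [Finset.mem_image] at hp
    obtain ⟨g, hg, rfl⟩ := hp
    have := hPD _ hpP g (Finset.mem_singleton_self g)
    have h2 := (Finset.mem_filter.mp hg).2
    omega
  calc Mset.card + P.card
      ≤ ∑ C ∈ P ∪ Mset.image (fun g => ({g} : Finset G)), V2 v (univ : Finset B) C := by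
        rw [Finset.sum_union hQdisj]
        have h1 : P.card ≤ ∑ C ∈ P, V2 v (univ : Finset B) C := by
          rw [Finset.card_eq_sum_ones]
          apply Finset.sum_le_sum
          intro p hp
          obtain ⟨b1, b2, hne, hv1, hv2⟩ := hpair p hp
          exact one_le_V2 v hne hv1 hv2
        have h2 : Mset.card ≤ ∑ C ∈ Mset.image (fun g => ({g} : Finset G)),
            V2 v (univ : Finset B) C := by
          rw [Finset.sum_image (fun g _ g' _ h => Finset.singleton_injective h),
            Finset.card_eq_sum_ones]
          apply Finset.sum_le_sum
          intro g hg
          obtain ⟨b1, b2, hne, h1, h2⟩ :=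
            exists_two_demanders v hv g (Finset.mem_filter.mp hg).2
          apply one_le_V2 v hne
          · rw [vsum, Finset.sum_singleton, h1]
          · rw [vsum, Finset.sum_singleton, h2]
        omega
    _ ≤ ∑ C ∈ (P ∪ Sng).erase ⊥, V2 v (univ : Finset B) C :=
        Finset.sum_le_sum_of_subset hQsub

end AuxLemmas

/-- every revenue-maximizing partition has social welfare at
least `(p¹ + p²)/(3·|G|)`. -/

theorem revmax_sw_ge_p1_p2_third [Nonempty B] [Nonempty G]
    (v : B → G → ℕ) (hv : ∀ b g, v b g ≤ 1)
    (π : Finpartition (univ : Finset G))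
    (hmax : ∀ π' : Finpartition (univ : Finset G), rev1 v π' ≤ rev1 v π) :
    ((pdem v 1 : ℚ) + (pdem v 2 : ℚ)) / (3 * (Fintype.card G : ℚ)) ≤ SW1 v π := by
  classical
  have hG : 0 < Fintype.card G := Fintype.card_pos
  set T : ℕ := ∑ C ∈ π.parts, V1 v (univ : Finset B) C with hT
  suffices hkey : pdem v 1 + pdem v 2 ≤ 3 * T by
    have hSW : SW1 v π = (T : ℚ) / (Fintype.card G : ℚ) := by
      rw [SW1, hT]
      push_cast
      ring
    rw [hSW, div_le_div_iff₀ (by positivity) (by positivity)]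
    have h1 : ((pdem v 1 : ℚ) + (pdem v 2 : ℚ)) ≤ 3 * (T : ℚ) := by exact_mod_cast hkey
    have hGpos : (0 : ℚ) < (Fintype.card G : ℚ) := by exact_mod_cast hG
    nlinarith [h1, hGpos]
  -- splitting sums over the parts of π
  have hsplit : ∀ f : G → ℕ, ∑ C ∈ π.parts, ∑ g ∈ C, f g = ∑ g, f g := by
    intro f
    have h := Finset.sum_biUnion (s := π.parts) (t := id) (f := f)
      π.supIndep.pairwiseDisjoint
    rw [π.biUnion_parts] at h
    exact h.symm
  -- the best single buyer's value is at most T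
  have hF1 : V1 v (univ : Finset B) (univ : Finset G) ≤ T := by
    apply Finset.sup_le
    intro b _
    calc vsum v b univ = ∑ C ∈ π.parts, vsum v b C := by
          simp only [vsum]
          exact (hsplit (v b)).symm
      _ ≤ T := by
          rw [hT]
          apply Finset.sum_le_sum
          intro C _
          exact Finset.le_sup (f := fun b' => vsum v b' C) (mem_univ b)
  -- revenue of any partition is at most T
  have hRev : ∀ ρ : Finpartition (univ : Finset G),
      ∑ C ∈ ρ.parts, V2 v (univ : Finset B) C ≤ T := by
    intro ρ
    have h1 := hmax ρ
    rw [rev1, rev1] at h1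
    have hc : (0 : ℚ) < (Fintype.card G : ℚ)⁻¹ := by
      have : (0 : ℚ) < (Fintype.card G : ℚ) := by exact_mod_cast hG
      positivity
    have h2 : ∑ C ∈ ρ.parts, (V2 v (univ : Finset B) C : ℚ)
        ≤ ∑ C ∈ π.parts, (V2 v (univ : Finset B) C : ℚ) :=
      le_of_mul_le_mul_left h1 hc
    have h3 : ∑ C ∈ ρ.parts, V2 v (univ : Finset B) C
        ≤ ∑ C ∈ π.parts, V2 v (univ : Finset B) C := by exact_mod_cast h2
    refine le_trans h3 ?_
    rw [hT]
    exact Finset.sum_le_sum fun C _ => V2_le_V1 v _ C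
  -- goods demanded exactly once and at least twice
  set Dset : Finset G := univ.filter (fun g : G => (∑ b, v b g) = 1) with hDset
  have hp2 : pdem v 2 = (univ.filter fun g : G => 2 ≤ ∑ b, v b g).card := rfl
  have hp1 : pdem v 1 = (univ.filter fun g : G => 2 ≤ ∑ b, v b g).card + Dset.card := by
    rw [pdem]
    have hsplit2 : univ.filter (fun g : G => 1 ≤ ∑ b, v b g)
        = (univ.filter fun g : G => 2 ≤ ∑ b, v b g) ∪ Dset := by
      ext g
      simp only [hDset, Finset.mem_filter, Finset.mem_union, mem_univ, true_and]
      omega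
    rw [hsplit2, Finset.card_union_of_disjoint]
    rw [Finset.disjoint_left]
    intro g h1 h2
    have := (Finset.mem_filter.mp h1).2
    have := (Finset.mem_filter.mp h2).2
    omega
  -- the owner of a good demanded exactly once
  have hwex : ∀ g ∈ Dset, ∃ b, v b g = 1 := by
    intro g hg
    have h1 := (Finset.mem_filter.mp hg).2
    by_contra h
    push_neg at h
    have hz : ∀ b ∈ univ, v b g = 0 := by
      intro b _
      have := hv b g
      have := h b
      omega
    rw [Finset.sum_eq_zero hz] at h1
    omega
  set w : G → B := fun g => if h : ∃ b, v b g = 1 then h.choose else Classical.arbitrary B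
    with hwdef
  have hw1 : ∀ g ∈ Dset, v (w g) g = 1 := by
    intro g hg
    have h := hwex g hg
    rw [hwdef]
    simp only [dif_pos h]
    exact h.choose_spec
  -- any family of cross-owner pairs inside Dset satisfies the hypotheses
  -- of `exists_partition_of_pairs`
  have hmkpair : ∀ P : Finset (Finset G),
      (∀ p ∈ P, p ⊆ Dset ∧ ∃ x ∈ p, ∃ y ∈ p, w x ≠ w y) →
      (∀ p ∈ P, ∃ b1 b2 : B, b1 ≠ b2 ∧ 1 ≤ vsum v b1 p ∧ 1 ≤ vsum v b2 p) ∧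
      (∀ p ∈ P, ∀ g ∈ p, (∑ b, v b g) = 1) := by
    intro P hP
    constructor
    · intro p hp
      obtain ⟨hsub, x, hx, y, hy, hxy⟩ := hP p hp
      refine ⟨w x, w y, hxy, ?_, ?_⟩
      · calc 1 = v (w x) x := (hw1 x (hsub hx)).symm
          _ ≤ vsum v (w x) p := Finset.single_le_sum (fun _ _ => Nat.zero_le _) hx
      · calc 1 = v (w y) y := (hw1 y (hsub hy)).symm
          _ ≤ vsum v (w y) p := Finset.single_le_sum (fun _ _ => Nat.zero_le _) hy
    · intro p hp g hg
      exact (Finset.mem_filter.mp ((hP p hp).1 hg)).2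
  -- the largest ownership class
  set m : ℕ := univ.sup fun b => (clsOf w Dset b).card with hmdef
  have hmM : m ≤ V1 v (univ : Finset B) (univ : Finset G) := by
    obtain ⟨b1, _, hb1⟩ := Finset.exists_mem_eq_sup univ univ_nonempty
      (fun b => (clsOf w Dset b).card)
    rw [hmdef, hb1]
    calc (clsOf w Dset b1).card = ∑ _g ∈ clsOf w Dset b1, 1 := by
          rw [Finset.card_eq_sum_ones]
      _ ≤ ∑ g ∈ clsOf w Dset b1, v b1 g := by
          apply Finset.sum_le_sum
          intro g hg
          have hgD : g ∈ Dset := clsOf_subset w Dset b1 hg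
          have hwg : w g = b1 := (Finset.mem_filter.mp hg).2
          have := hw1 g hgD
          rw [hwg] at this
          omega
      _ ≤ ∑ g, v b1 g := Finset.sum_le_sum_of_subset (Finset.subset_univ _)
      _ = vsum v b1 univ := rfl
      _ ≤ V1 v (univ : Finset B) (univ : Finset G) :=
          Finset.le_sup (f := fun b => vsum v b univ) (mem_univ b1)
  -- case analysis
  by_cases hcase1 :
      pdem v 1 + pdem v 2 ≤ 3 * V1 v (univ : Finset B) (univ : Finset G)
  · omega
  push_neg at hcase1
  by_cases hcase2 : Dset.card ≤ (univ.filter fun g : G => 2 ≤ ∑ b, v b g).card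
  · -- many multi-demanded goods: the discrete partition suffices
    obtain ⟨ρ, hρ⟩ := exists_partition_of_pairs v hv ∅ (by simp) (by simp) (by simp)
    have h := hRev ρ
    simp only [Finset.card_empty] at hρ
    omega
  push_neg at hcase2
  by_cases hcase3 : 2 * m ≤ Dset.card
  · -- balanced classes: a large matching exists
    obtain ⟨P, hdisj, hprop, hcard⟩ := pairing w Dset.card Dset le_rfl
      (by rw [← hmdef]; exact hcase3)
    obtain ⟨hpairP, hPD⟩ := hmkpair P hprop
    obtain ⟨ρ, hρ⟩ := exists_partition_of_pairs v hv P hdisj hpairP hPD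
    have h := hRev ρ
    omega
  · -- one dominant class: pair the rest into it
    push_neg at hcase3
    obtain ⟨b1, _, hb1⟩ := Finset.exists_mem_eq_sup univ univ_nonempty
      (fun b => (clsOf w Dset b).card)
    have hb1m : (clsOf w Dset b1).card = m := by rw [hmdef, ← hb1]
    have hsub1 : clsOf w Dset b1 ⊆ Dset := clsOf_subset w Dset b1
    have hsd : (Dset \ clsOf w Dset b1).card = Dset.card - m := by
      rw [Finset.card_sdiff_of_subset hsub1, hb1m]
    have hmq : m ≤ Dset.card := by
      rw [← hb1m]
      exact Finset.card_le_card hsub1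
    have hle : (Dset \ clsOf w Dset b1).card ≤ (clsOf w Dset b1).card := by
      rw [hsd, hb1m]
      omega
    obtain ⟨P, hdisj, hprop, hcardP⟩ := pairing_inj w Dset b1 hle
    obtain ⟨hpairP, hPD⟩ := hmkpair P hprop
    obtain ⟨ρ, hρ⟩ := exists_partition_of_pairs v hv P hdisj hpairP hPD
    have h := hRev ρ
    rw [hsd] at hcardP
    omega
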